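/- arXiv:2106.16112 — 7 statements merged into one kernel-verified Lean document; each statement's English description precedes it below -/
import Mathlib

section
/- Existence of a small (j,k,d)-family: for positive integers j, k, d with j + k ≤ d, there exists a family I of subsets of {1,...,d} with |I| ≤ ⌈2 * ((j+k)^(j+k+1) / (j^j * k^k)) * log d⌉ such that for every pair of disjoint subsets J, K of {1,...,d} with |J| = j and |K| = k, there exists I ∈ I with I ∩ J = ∅ and K ⊆ I. -/
open Finset

lemma wsum (j k : ℕ) {α : Type*} [DecidableEq α] (s : Finset α) :
    ∑ t ∈ s.powerset, k ^ t.card * j ^ (s.card - t.card) = (k + j) ^ s.card := by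
  have h := Finset.prod_add (fun _ : α => k) (fun _ : α => j) s
  simp only [Finset.prod_const] at h
  rw [h]
  refine Finset.sum_congr rfl fun t ht => ?_
  rw [Finset.card_sdiff_of_subset (Finset.mem_powerset.mp ht)]

lemma pair_sum {d j k : ℕ} (J K : Finset (Fin d)) (hdisj : Disjoint J K)
    (hJ : J.card = j) (hK : K.card = k) :
    ∑ I ∈ Finset.univ.filter (fun I => Disjoint I J ∧ K ⊆ I),
      k ^ I.card * j ^ (d - I.card) = k ^ k * j ^ j * (k + j) ^ (d - (j + k)) := by
  classical
  set R : Finset (Fin d) := Finset.univ \ (J ∪ K) with hR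
  have hRcard : R.card = d - (j + k) := by
    rw [hR, Finset.card_sdiff_of_subset (Finset.subset_univ _), Finset.card_univ,
      Fintype.card_fin, Finset.card_union_of_disjoint hdisj, hJ, hK]
  have hjk : j + k ≤ d := by
    have := Finset.card_le_univ (J ∪ K)
    rwa [Finset.card_union_of_disjoint hdisj, hJ, hK, Fintype.card_fin] at this
  have key : ∀ T ∈ R.powerset, (K ∪ T).card = k + T.card ∧
      Disjoint (K ∪ T) J ∧ K ⊆ K ∪ T := by
    intro T hT
    rw [Finset.mem_powerset] at hT
    have hTK : Disjoint K T := by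
      refine Finset.disjoint_left.mpr fun a haK haT => ?_
      have := hT haT
      simp [hR] at this
      exact this.2 haK
    have hTJ : Disjoint T J := by
      refine Finset.disjoint_left.mpr fun a haT haJ => ?_
      have := hT haT
      simp [hR] at this
      exact this.1 haJ
    exact ⟨by rw [Finset.card_union_of_disjoint hTK, hK],
      Finset.disjoint_union_left.mpr ⟨hdisj.symm, hTJ⟩, Finset.subset_union_left⟩
  rw [show ∑ I ∈ Finset.univ.filter (fun I => Disjoint I J ∧ K ⊆ I),
        k ^ I.card * j ^ (d - I.card)
      = ∑ T ∈ R.powerset, k ^ (K ∪ T).card * j ^ (d - (K ∪ T).card) from ?_]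
  · have : ∀ T ∈ R.powerset, k ^ (K ∪ T).card * j ^ (d - (K ∪ T).card)
        = k ^ k * j ^ j * (k ^ T.card * j ^ (R.card - T.card)) := by
      intro T hT
      have h1 := (key T hT).1
      have hTR := Finset.mem_powerset.mp hT
      have hTc : T.card ≤ R.card := Finset.card_le_card hTR
      rw [h1, hRcard]
      have : d - (k + T.card) = j + (d - (j + k) - T.card) := by omega
      rw [this, pow_add, pow_add]
      ring
    rw [Finset.sum_congr rfl this, ← Finset.mul_sum, wsum, hRcard]
  · refine (Finset.sum_nbij' (fun T => K ∪ T) (fun I => I \ K) ?_ ?_ ?_ ?_ ?_).symm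
    · intro T hT
      simp only [Finset.mem_filter, Finset.mem_univ, true_and]
      exact (key T hT).2
    · intro I hI
      simp only [Finset.mem_filter, Finset.mem_univ, true_and] at hI
      rw [Finset.mem_powerset, hR]
      intro a ha
      simp only [Finset.mem_sdiff] at ha ⊢
      refine ⟨Finset.mem_univ _, ?_⟩
      simp only [Finset.mem_union]
      rintro (h | h)
      · exact (Finset.disjoint_left.mp hI.1 ha.1) h
      · exact ha.2 h
    · intro T hT
      have hTK : Disjoint K T := by
        have hTR := Finset.mem_powerset.mp hT
        refine Finset.disjoint_left.mpr fun a haK haT => ?_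
        have := hTR haT
        simp [hR] at this
        exact this.2 haK
      rw [Finset.union_sdiff_cancel_left hTK]
    · intro I hI
      simp only [Finset.mem_filter, Finset.mem_univ, true_and] at hI
      rw [Finset.union_comm, Finset.sdiff_union_of_subset hI.2]
    · intro T hT
      rfl

lemma step {d j k : ℕ} (hj : 1 ≤ j) (hk : 1 ≤ k)
    (S : Finset (Finset (Fin d) × Finset (Fin d)))
    (hS : ∀ p ∈ S, Disjoint p.1 p.2 ∧ p.1.card = j ∧ p.2.card = k) :
    ∃ I : Finset (Fin d),
      (j+k)^(j+k) * (S.filter (fun p => ¬ (Disjoint I p.1 ∧ p.2 ⊆ I))).card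
        ≤ ((j+k)^(j+k) - j^j * k^k) * S.card := by
  classical
  rcases S.eq_empty_or_nonempty with rfl | hne
  · exact ⟨∅, by simp⟩
  have hjk : j + k ≤ d := by
    obtain ⟨p, hp⟩ := hne
    obtain ⟨h1, h2, h3⟩ := hS p hp
    have := Finset.card_le_univ (p.1 ∪ p.2)
    rwa [Finset.card_union_of_disjoint h1, h2, h3, Fintype.card_fin] at this
  -- main averaging claim
  have main : ∃ I : Finset (Fin d),
      j^j * k^k * S.card ≤
        (j+k)^(j+k) * (S.filter (fun p => Disjoint I p.1 ∧ p.2 ⊆ I)).card := by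
    by_contra hcon
    push_neg at hcon
    have Wpos : ∀ I : Finset (Fin d), 0 < k ^ I.card * j ^ (d - I.card) :=
      fun I => Nat.mul_pos (Nat.pow_pos hk) (Nat.pow_pos hj)
    have swap : ∑ I : Finset (Fin d), (k ^ I.card * j ^ (d - I.card)) *
          (S.filter (fun p => Disjoint I p.1 ∧ p.2 ⊆ I)).card
        = S.card * (k ^ k * j ^ j * (k + j) ^ (d - (j + k))) := by
      have : ∀ I : Finset (Fin d),
          (k ^ I.card * j ^ (d - I.card)) *
            (S.filter (fun p => Disjoint I p.1 ∧ p.2 ⊆ I)).card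
          = ∑ p ∈ S, if Disjoint I p.1 ∧ p.2 ⊆ I then
              k ^ I.card * j ^ (d - I.card) else 0 := by
        intro I
        rw [← Finset.sum_filter, Finset.sum_const, smul_eq_mul, mul_comm]
      rw [Finset.sum_congr rfl fun I _ => this I, Finset.sum_comm]
      rw [Finset.sum_congr rfl fun p hp => ?_, Finset.sum_const, smul_eq_mul]
      obtain ⟨h1, h2, h3⟩ := hS p hp
      rw [← pair_sum p.1 p.2 h1 h2 h3, Finset.sum_filter]
    have total : ∑ I : Finset (Fin d), k ^ I.card * j ^ (d - I.card) = (k + j) ^ d := by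
      have := wsum j k (Finset.univ : Finset (Fin d))
      rw [Finset.powerset_univ] at this
      simpa using this
    have lhs_lt : ∑ I : Finset (Fin d), (k ^ I.card * j ^ (d - I.card)) *
          ((j+k)^(j+k) * (S.filter (fun p => Disjoint I p.1 ∧ p.2 ⊆ I)).card)
        < ∑ I : Finset (Fin d), (k ^ I.card * j ^ (d - I.card)) *
          (j^j * k^k * S.card) := by
      exact Finset.sum_lt_sum_of_nonempty Finset.univ_nonempty fun I _ =>
        mul_lt_mul_of_pos_left (hcon I) (Wpos I)
    rw [Finset.sum_congr rfl (fun I _ => (mul_left_comm _ _ _)),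
      ← Finset.mul_sum, swap, ← Finset.sum_mul, total] at lhs_lt
    -- now: (j+k)^(j+k) * (S.card * (k^k*j^j*(k+j)^(d-(j+k)))) < (k+j)^d * (j^j*k^k*S.card)
    have : (j+k)^(j+k) * (S.card * (k ^ k * j ^ j * (k + j) ^ (d - (j + k))))
        = (k + j) ^ d * (j^j * k^k * S.card) := by
      have hd' : (j + k) + (d - (j + k)) = d := by omega
      calc (j+k)^(j+k) * (S.card * (k ^ k * j ^ j * (k + j) ^ (d - (j + k))))
          = ((k+j)^(j+k) * (k + j) ^ (d - (j + k))) * (j^j * k^k * S.card) := by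
            rw [add_comm k j]; ring
        _ = (k + j) ^ d * (j^j * k^k * S.card) := by
            rw [← pow_add, add_comm k j, hd']
    omega
  obtain ⟨I, hI⟩ := main
  refine ⟨I, ?_⟩
  have hsplit := Finset.card_filter_add_card_filter_not
    (s := S) (p := fun p => Disjoint I p.1 ∧ p.2 ⊆ I)
  set h1 := (S.filter (fun p => Disjoint I p.1 ∧ p.2 ⊆ I)).card
  set h2 := (S.filter (fun p => ¬(Disjoint I p.1 ∧ p.2 ⊆ I))).card
  have hAB : j^j * k^k ≤ (j+k)^(j+k) := by
    calc j^j * k^k ≤ (j+k)^j * (j+k)^k :=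
          Nat.mul_le_mul (Nat.pow_le_pow_left (Nat.le_add_right _ _) _)
            (Nat.pow_le_pow_left (Nat.le_add_left _ _) _)
      _ = (j+k)^(j+k) := (pow_add _ _ _).symm
  rw [Nat.sub_mul]
  have e1 : (j+k)^(j+k) * S.card = (j+k)^(j+k) * h1 + (j+k)^(j+k) * h2 := by
    rw [← Nat.mul_add, hsplit]
  have e2 : j^j * k^k * S.card ≤ (j+k)^(j+k) * S.card :=
    Nat.mul_le_mul_right _ hAB
  omega

lemma iter {d j k : ℕ} (hj : 1 ≤ j) (hk : 1 ≤ k) (t : ℕ) :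
    ∃ 𝓘 : Finset (Finset (Fin d)),
      𝓘.card ≤ t ∧
      ((j+k)^(j+k))^t *
        ((Finset.univ.filter fun p : Finset (Fin d) × Finset (Fin d) =>
            Disjoint p.1 p.2 ∧ p.1.card = j ∧ p.2.card = k).filter
          (fun p => ∀ I ∈ 𝓘, ¬(Disjoint I p.1 ∧ p.2 ⊆ I))).card
        ≤ ((j+k)^(j+k) - j^j * k^k)^t *
          (Finset.univ.filter fun p : Finset (Fin d) × Finset (Fin d) =>
            Disjoint p.1 p.2 ∧ p.1.card = j ∧ p.2.card = k).card := by
  classical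
  set P := (Finset.univ.filter fun p : Finset (Fin d) × Finset (Fin d) =>
      Disjoint p.1 p.2 ∧ p.1.card = j ∧ p.2.card = k) with hP
  induction t with
  | zero => exact ⟨∅, le_refl _, by simp⟩
  | succ t ih =>
    obtain ⟨𝓘, hcard, hbound⟩ := ih
    set S := P.filter (fun p => ∀ I ∈ 𝓘, ¬(Disjoint I p.1 ∧ p.2 ⊆ I)) with hSdef
    have hSprop : ∀ p ∈ S, Disjoint p.1 p.2 ∧ p.1.card = j ∧ p.2.card = k := by
      intro p hp
      have := Finset.mem_filter.mp (Finset.mem_filter.mp hp).1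
      exact this.2
    obtain ⟨I, hI⟩ := step hj hk S hSprop
    refine ⟨insert I 𝓘, ?_, ?_⟩
    · exact le_trans (Finset.card_insert_le _ _) (Nat.add_le_add_right hcard 1)
    · have hfilter : P.filter (fun p => ∀ I' ∈ insert I 𝓘, ¬(Disjoint I' p.1 ∧ p.2 ⊆ I'))
          = S.filter (fun p => ¬(Disjoint I p.1 ∧ p.2 ⊆ I)) := by
        ext p
        simp only [hSdef, Finset.mem_filter, Finset.forall_mem_insert]
        tauto
      rw [hfilter]
      set A := j^j * k^k
      set B := (j+k)^(j+k)
      calc B^(t+1) * (S.filter (fun p => ¬(Disjoint I p.1 ∧ p.2 ⊆ I))).card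
          = B^t * (B * (S.filter (fun p => ¬(Disjoint I p.1 ∧ p.2 ⊆ I))).card) := by
            ring
        _ ≤ B^t * ((B - A) * S.card) := Nat.mul_le_mul_left _ hI
        _ = (B - A) * (B^t * S.card) := by ring
        _ ≤ (B - A) * ((B - A)^t * P.card) := Nat.mul_le_mul_left _ hbound
        _ = (B - A)^(t+1) * P.card := by ring

lemma keyineq (j k d : ℕ) (hj : 1 ≤ j) (hk : 1 ≤ k) (hd : j + k ≤ d) :
    (((j+k)^(j+k) - j^j*k^k : ℕ) : ℝ) ^
        (⌈2 * (((j + k : ℝ)) ^ (j + k + 1) / ((j : ℝ) ^ j * (k : ℝ) ^ k)) *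
          Real.log d⌉₊) * (d : ℝ)^(j+k)
      < (((j+k)^(j+k) : ℕ) : ℝ) ^
        (⌈2 * (((j + k : ℝ)) ^ (j + k + 1) / ((j : ℝ) ^ j * (k : ℝ) ^ k)) *
          Real.log d⌉₊) := by
  have hjR : (0:ℝ) < j := by exact_mod_cast hj
  have hkR : (0:ℝ) < k := by exact_mod_cast hk
  set A : ℝ := (j : ℝ) ^ j * (k : ℝ) ^ k with hAdef
  set B : ℝ := ((j : ℝ) + k) ^ (j + k) with hBdef
  set t : ℕ := ⌈2 * (((j + k : ℝ)) ^ (j + k + 1) / A) * Real.log d⌉₊ with htdef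
  have hA : 0 < A := by positivity
  have hB : 0 < B := by positivity
  have hABn : j^j*k^k ≤ (j+k)^(j+k) := by
    calc j^j * k^k ≤ (j+k)^j * (j+k)^k :=
          Nat.mul_le_mul (Nat.pow_le_pow_left (Nat.le_add_right _ _) _)
            (Nat.pow_le_pow_left (Nat.le_add_left _ _) _)
      _ = (j+k)^(j+k) := (pow_add _ _ _).symm
  have hAB : A ≤ B := by rw [hAdef, hBdef]; exact_mod_cast hABn
  have hd2 : (2:ℝ) ≤ d := by exact_mod_cast le_trans (by omega : 2 ≤ j + k) hd
  have hlog : 0 < Real.log d := Real.log_pos (by linarith)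
  have ht : 2 * (((j + k : ℝ)) ^ (j + k + 1) / A) * Real.log d ≤ t := Nat.le_ceil _
  have hexpand : ((j + k : ℝ)) ^ (j + k + 1) = B * ((j:ℝ) + k) := by
    rw [hBdef, pow_succ]
  -- key: (j+k) * log d < (A/B) * t
  have hkey : ((j:ℝ) + k) * Real.log d < (A / B) * t := by
    have h1 : (A / B) * (2 * (((j + k : ℝ)) ^ (j + k + 1) / A) * Real.log d)
        = 2 * ((j:ℝ) + k) * Real.log d := by
      rw [hexpand]; field_simp
    have h2 : (A / B) * (2 * (((j + k : ℝ)) ^ (j + k + 1) / A) * Real.log d)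
        ≤ (A / B) * t := by
      apply mul_le_mul_of_nonneg_left ht (by positivity)
    nlinarith [mul_pos (by positivity : (0:ℝ) < (j:ℝ)+k) hlog]
  -- d^(j+k) < exp((A/B)*t)
  have hdpow : (d:ℝ)^(j+k) < Real.exp ((A/B) * t) := by
    have : (d:ℝ)^(j+k) = Real.exp (((j:ℝ)+k) * Real.log d) := by
      rw [show ((j:ℝ)+k) = ((j+k : ℕ):ℝ) by push_cast; ring, Real.exp_nat_mul,
        Real.exp_log (by linarith)]
    rw [this]
    exact Real.exp_lt_exp.mpr hkey
  -- (B - A)^t ≤ B^t * exp(-(A/B)*t)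
  have hpow : (B - A)^t ≤ B^t * Real.exp (-(A/B) * t) := by
    have h1 : B - A ≤ B * Real.exp (-(A/B)) := by
      have := Real.add_one_le_exp (-(A/B))
      have h2 : B * (-(A/B) + 1) ≤ B * Real.exp (-(A/B)) :=
        mul_le_mul_of_nonneg_left this hB.le
      calc B - A = B * (-(A/B) + 1) := by field_simp; ring
        _ ≤ B * Real.exp (-(A/B)) := h2
    calc (B - A)^t ≤ (B * Real.exp (-(A/B)))^t :=
          pow_le_pow_left₀ (by linarith) h1 t
      _ = B^t * Real.exp (-(A/B) * t) := by
        rw [mul_pow, ← Real.exp_nat_mul]; ring_nf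
  have cast1 : (((j+k)^(j+k) - j^j*k^k : ℕ) : ℝ) = B - A := by
    rw [Nat.cast_sub hABn]; push_cast; rfl
  have cast2 : ((((j+k)^(j+k) : ℕ)) : ℝ) = B := by push_cast; rfl
  rw [cast1, cast2]
  calc (B - A)^t * (d:ℝ)^(j+k)
      ≤ (B^t * Real.exp (-(A/B) * t)) * (d:ℝ)^(j+k) :=
        mul_le_mul_of_nonneg_right hpow (by positivity)
    _ < (B^t * Real.exp (-(A/B) * t)) * Real.exp ((A/B) * t) :=
        mul_lt_mul_of_pos_left hdpow (by positivity)
    _ = B^t := by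
        rw [mul_assoc, ← Real.exp_add]
        simp

theorem stmt2 (j k d : ℕ) (hj : 1 ≤ j) (hk : 1 ≤ k) (hd : j + k ≤ d) :
    ∃ 𝓘 : Finset (Finset (Fin d)),
      𝓘.card ≤ ⌈2 * (((j + k : ℝ)) ^ (j + k + 1) / ((j : ℝ) ^ j * (k : ℝ) ^ k)) *
        Real.log d⌉₊ ∧
      ∀ J K : Finset (Fin d), Disjoint J K → J.card = j → K.card = k →
        ∃ I ∈ 𝓘, Disjoint I J ∧ K ⊆ I := by
  classical
  set t := ⌈2 * (((j + k : ℝ)) ^ (j + k + 1) / ((j : ℝ) ^ j * (k : ℝ) ^ k)) *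
      Real.log d⌉₊ with htdef
  obtain ⟨𝓘, hcard, hbound⟩ := iter (d := d) hj hk t
  set P := (Finset.univ.filter fun p : Finset (Fin d) × Finset (Fin d) =>
      Disjoint p.1 p.2 ∧ p.1.card = j ∧ p.2.card = k) with hP
  have hPcard : P.card ≤ d^(j+k) := by
    have hsub : P ⊆ (Finset.powersetCard j (Finset.univ : Finset (Fin d))) ×ˢ
        (Finset.powersetCard k (Finset.univ : Finset (Fin d))) := by
      intro p hp
      obtain ⟨-, h1, h2, h3⟩ := Finset.mem_filter.mp hp
      rw [Finset.mem_product, Finset.mem_powersetCard, Finset.mem_powersetCard]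
      exact ⟨⟨Finset.subset_univ _, h2⟩, Finset.subset_univ _, h3⟩
    calc P.card ≤ _ := Finset.card_le_card hsub
      _ = (Nat.choose d j) * (Nat.choose d k) := by
        rw [Finset.card_product, Finset.card_powersetCard, Finset.card_powersetCard,
          Finset.card_univ, Fintype.card_fin]
      _ ≤ d^j * d^k := Nat.mul_le_mul (Nat.choose_le_pow _ _) (Nat.choose_le_pow _ _)
      _ = d^(j+k) := (pow_add _ _ _).symm
  have hlt : ((j+k)^(j+k) - j^j*k^k)^t * P.card < ((j+k)^(j+k))^t := by
    have h1 : (((j+k)^(j+k) - j^j*k^k : ℕ) : ℝ)^t * (P.card : ℝ)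
        < (((j+k)^(j+k) : ℕ) : ℝ)^t := by
      calc (((j+k)^(j+k) - j^j*k^k : ℕ) : ℝ)^t * (P.card : ℝ)
          ≤ (((j+k)^(j+k) - j^j*k^k : ℕ) : ℝ)^t * ((d:ℝ)^(j+k)) := by
            apply mul_le_mul_of_nonneg_left _ (by positivity)
            exact_mod_cast hPcard
        _ < (((j+k)^(j+k) : ℕ) : ℝ)^t := keyineq j k d hj hk hd
    exact_mod_cast h1
  have hzero : (P.filter (fun p => ∀ I ∈ 𝓘, ¬(Disjoint I p.1 ∧ p.2 ⊆ I))).card = 0 := by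
    by_contra hne
    have h1 : 1 ≤ (P.filter (fun p => ∀ I ∈ 𝓘, ¬(Disjoint I p.1 ∧ p.2 ⊆ I))).card :=
      Nat.one_le_iff_ne_zero.mpr hne
    have h2 : ((j+k)^(j+k))^t ≤ ((j+k)^(j+k))^t *
        (P.filter (fun p => ∀ I ∈ 𝓘, ¬(Disjoint I p.1 ∧ p.2 ⊆ I))).card :=
      Nat.le_mul_of_pos_right _ h1
    omega
  refine ⟨𝓘, hcard, fun J K hdisj hJ hK => ?_⟩
  have hmem : (J, K) ∈ P := by
    rw [hP, Finset.mem_filter]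
    exact ⟨Finset.mem_univ _, hdisj, hJ, hK⟩
  have hnot : ¬ (∀ I ∈ 𝓘, ¬(Disjoint I J ∧ K ⊆ I)) := by
    intro hall
    have hmem2 : (J, K) ∈ P.filter (fun p => ∀ I ∈ 𝓘, ¬(Disjoint I p.1 ∧ p.2 ⊆ I)) :=
      Finset.mem_filter.mpr ⟨hmem, hall⟩
    rw [Finset.card_eq_zero] at hzero
    rw [hzero] at hmem2
    exact absurd hmem2 (Finset.notMem_empty _)
  push_neg at hnot
  exact hnot
end

section
/- Approximate Gonzalez yields a k-center coreset: let (M, dist) be a metric space, A ⊆ M a finite set, c ≥ 1, and let B = {b_0, b_1, ..., b_k} ⊆ A be constructed greedily so that for each i ∈ {1,...,k}, the point b_i satisfies c · dist(b_i, {b_0,...,b_{i-1}}) ≥ max_{a ∈ A} dist(a, {b_0,...,b_{i-1}}). Then for every set C ⊆ M with |C| = k, max_{a ∈ A} dist(a, C) ≤ (1 + 2c) · max_{b ∈ B} dist(b, C). -/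
theorem stmt5 {M : Type*} [MetricSpace M] (k : ℕ) (A : Finset M) (hA : A.Nonempty)
    (c : ℝ) (hc : 1 ≤ c) (b : Fin (k + 1) → M) (hb : ∀ i, b i ∈ A)
    (hgreedy : ∀ i : Fin (k + 1), 0 < i.val → ∀ a ∈ A,
      Metric.infDist a (b '' {m | m < i}) ≤ c * Metric.infDist (b i) (b '' {m | m < i}))
    (C : Finset M) (hC : C.Nonempty) (hCk : C.card = k) :
    A.sup' hA (fun a => Metric.infDist a (C : Set M)) ≤
      (1 + 2 * c) *
        (Finset.univ.sup' Finset.univ_nonempty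
          fun i : Fin (k + 1) => Metric.infDist (b i) (C : Set M)) := by
  set r := Finset.univ.sup' Finset.univ_nonempty
      fun i : Fin (k + 1) => Metric.infDist (b i) (C : Set M) with hr
  have hCne : (C : Set M).Nonempty := by exact_mod_cast hC
  have hCcomp : IsCompact (C : Set M) := (C.finite_toSet).isCompact
  have hrle : ∀ i, Metric.infDist (b i) (C : Set M) ≤ r := fun i =>
    Finset.le_sup' (fun i : Fin (k+1) => Metric.infDist (b i) (C : Set M)) (Finset.mem_univ i)
  have hr0 : 0 ≤ r := le_trans (Metric.infDist_nonneg) (hrle 0)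
  -- choose nearest centers
  have ht : ∀ i : Fin (k + 1), ∃ t ∈ C, Metric.infDist (b i) (C : Set M) = dist (b i) t := by
    intro i
    obtain ⟨t, htC, hteq⟩ := hCcomp.exists_infDist_eq_dist hCne (b i)
    exact ⟨t, htC, hteq⟩
  choose t htC hteq using ht
  -- pigeonhole
  obtain ⟨i, -, j, -, hij, htij⟩ :
      ∃ i ∈ (Finset.univ : Finset (Fin (k+1))), ∃ j ∈ Finset.univ, i ≠ j ∧ t i = t j := by
    apply Finset.exists_ne_map_eq_of_card_lt_of_maps_to (t := C)
    · simp [hCk]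
    · intro i _; exact htC i
  -- wlog i < j
  wlog hlt : i < j generalizing i j
  · exact this j i hij.symm htij.symm (lt_of_le_of_ne (not_lt.mp hlt) hij.symm)
  have hbi_mem : b i ∈ b '' {m | m < j} := ⟨i, hlt, rfl⟩
  have hSne : (b '' {m | m < j}).Nonempty := ⟨_, hbi_mem⟩
  have h2r : Metric.infDist (b j) (b '' {m | m < j}) ≤ 2 * r := by
    calc Metric.infDist (b j) (b '' {m | m < j}) ≤ dist (b j) (b i) :=
          Metric.infDist_le_dist_of_mem hbi_mem
      _ ≤ dist (b j) (t j) + dist (t i) (b i) := by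
          rw [htij]; exact (dist_triangle _ _ _).trans (by rw [dist_comm (t j) (b i)])
      _ ≤ r + r := by
          have := hrle j; rw [hteq j] at this
          have h2 := hrle i; rw [hteq i, dist_comm] at h2
          linarith
      _ = 2 * r := by ring
  have hj0 : 0 < j.val := Nat.pos_of_ne_zero (by
    intro h
    exact absurd (Fin.lt_def.mp hlt) (by omega))
  -- main bound
  apply Finset.sup'_le
  intro a ha
  have hgr := hgreedy j hj0 a ha
  have hScomp : IsCompact (b '' {m | m < j}) :=
    (Set.Finite.image b (Set.toFinite _)).isCompact
  obtain ⟨s, hsS, hseq⟩ := hScomp.exists_infDist_eq_dist hSne a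
  obtain ⟨m, hm, rfl⟩ := hsS
  have h1 : dist a (b m) ≤ c * (2 * r) := by
    rw [← hseq]; exact hgr.trans (by nlinarith [h2r, Metric.infDist_nonneg (x := b j) (s := b '' {m | m < j})])
  calc Metric.infDist a (C : Set M)
      ≤ Metric.infDist (b m) (C : Set M) + dist a (b m) :=
        Metric.infDist_le_infDist_add_dist
    _ ≤ r + c * (2 * r) := add_le_add (hrle m) h1
    _ = (1 + 2 * c) * r := by ring
end

section
/- Union of restricted k-center coresets: let P be the set of points in (ℝ ∪ {?})^d with at most j missing coordinates, X ⊆ P finite, and let I be a (j,k,d)-family of subsets of [d]. Suppose for each I ∈ I, Y_I ⊆ {x ∈ X : I ⊆ I_x} satisfies: for every finite C ⊆ ℝ^d with |C| = k, max over x ∈ X with I ⊆ I_x of dist_I(x,C) ≤ α · max_{y ∈ Y_I} dist_I(y,C). Then Y = ∪_I Y_I satisfies: for every C ⊆ ℝ^d with |C| = k, max_{x ∈ X} dist(x, C) ≤ α√d · max_{y ∈ Y} dist(y, C). -/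
/-- The set of available (non-missing) coordinates of a point with missing values. -/
noncomputable def avail {d : ℕ} (x : Fin d → Option ℝ) : Finset (Fin d) :=
  Finset.univ.filter (fun i => x i ≠ none)

/-- The `I`-induced distance between a point with missing values and an ordinary point. -/
noncomputable def distOn {d : ℕ} (I : Finset (Fin d)) (x : Fin d → Option ℝ)
    (c : Fin d → ℝ) : ℝ :=
  Real.sqrt (∑ i ∈ I, ((x i).getD 0 - c i) ^ 2)

lemma distOn_mono {d : ℕ} {I J : Finset (Fin d)} (h : I ⊆ J) (x : Fin d → Option ℝ)
    (c : Fin d → ℝ) : distOn I x c ≤ distOn J x c := by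
  apply Real.sqrt_le_sqrt
  exact Finset.sum_le_sum_of_subset_of_nonneg h (fun i _ _ => sq_nonneg _)

theorem stmt8 (d j k : ℕ) (hj : 1 ≤ j) (hk : 1 ≤ k) (hd : j + k ≤ d)
    (α : ℝ) (hα : 0 ≤ α)
    (X : Finset (Fin d → Option ℝ)) (hX : ∀ x ∈ X, d - j ≤ (avail x).card)
    (𝓘 : Finset (Finset (Fin d)))
    (hfam : ∀ J K : Finset (Fin d), Disjoint J K → J.card = j → K.card = k →
      ∃ I ∈ 𝓘, Disjoint I J ∧ K ⊆ I)
    (Y : Finset (Fin d) → Finset (Fin d → Option ℝ))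
    (hYsub : ∀ I ∈ 𝓘, ∀ y ∈ Y I, y ∈ X ∧ I ⊆ avail y)
    (hcore : ∀ I ∈ 𝓘, ∀ C : Finset (Fin d → ℝ), ∀ hCne : C.Nonempty, C.card = k →
      ∀ x ∈ X, I ⊆ avail x →
        ∃ y ∈ Y I, C.inf' hCne (fun c => distOn I x c) ≤
          α * C.inf' hCne (fun c => distOn I y c))
    (C : Finset (Fin d → ℝ)) (hC : C.Nonempty) (hCk : C.card = k)
    (x : Fin d → Option ℝ) (hx : x ∈ X) :
    ∃ y ∈ 𝓘.biUnion Y,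
      C.inf' hC (fun c => distOn (avail x) x c) ≤
        α * Real.sqrt d * C.inf' hC (fun c => distOn (avail y) y c) := by
  classical
  set A := avail x with hA
  have hAcard : d - j ≤ A.card := hX x hx
  have hAle : A.card ≤ d := by
    simpa using Finset.card_le_univ A
  have hAne : A.Nonempty := by
    rw [← Finset.card_pos]; omega
  -- choose for each center a maximizing coordinate
  have hg : ∀ c : Fin d → ℝ, ∃ i ∈ A,
      ∀ i' ∈ A, ((x i').getD 0 - c i') ^ 2 ≤ ((x i).getD 0 - c i) ^ 2 :=
    fun c => Finset.exists_max_image A (fun i => ((x i).getD 0 - c i) ^ 2) hAne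
  choose g hg1 hg2 using hg
  set K₀ : Finset (Fin d) := C.image g with hK₀
  have hK₀A : K₀ ⊆ A := by
    intro i hi
    obtain ⟨c, _, rfl⟩ := Finset.mem_image.mp hi
    exact hg1 c
  have hK₀card : K₀.card ≤ k := hCk ▸ Finset.card_image_le
  -- missing coordinates
  set M : Finset (Fin d) := Finset.univ \ A with hM
  have hMcard : M.card ≤ j := by
    rw [hM, Finset.card_sdiff_of_subset (Finset.subset_univ A)]
    simp only [Finset.card_univ, Fintype.card_fin]
    omega
  have hMK₀ : M ⊆ Finset.univ \ K₀ := by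
    intro i hi
    rw [hM, Finset.mem_sdiff] at hi
    rw [Finset.mem_sdiff]
    exact ⟨hi.1, fun h => hi.2 (hK₀A h)⟩
  have hcard1 : (Finset.univ \ K₀).card = d - K₀.card := by
    rw [Finset.card_sdiff_of_subset (Finset.subset_univ K₀), Finset.card_univ, Fintype.card_fin]
  obtain ⟨J, hMJ, hJsub, hJcard⟩ := Finset.exists_subsuperset_card_eq hMK₀ hMcard
    (by rw [hcard1]; omega)
  have hK₀J : K₀ ⊆ Finset.univ \ J := by
    intro i hi
    rw [Finset.mem_sdiff]
    refine ⟨Finset.mem_univ i, fun h => ?_⟩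
    exact (Finset.mem_sdiff.mp (hJsub h)).2 hi
  have hcard2 : (Finset.univ \ J).card = d - j := by
    rw [Finset.card_sdiff_of_subset (Finset.subset_univ J), Finset.card_univ, Fintype.card_fin, hJcard]
  obtain ⟨K, hK₀K, hKsub, hKcard⟩ := Finset.exists_subsuperset_card_eq hK₀J hK₀card
    (by rw [hcard2]; omega)
  have hdisj : Disjoint J K := by
    rw [Finset.disjoint_right]
    intro i hiK hiJ
    exact (Finset.mem_sdiff.mp (hKsub hiK)).2 hiJ
  obtain ⟨I, hI𝓘, hIJ, hKI⟩ := hfam J K hdisj hJcard hKcard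
  have hIA : I ⊆ A := by
    intro i hi
    by_contra hiA
    have : i ∈ M := by rw [hM, Finset.mem_sdiff]; exact ⟨Finset.mem_univ i, hiA⟩
    exact (Finset.disjoint_left.mp hIJ hi) (hMJ this)
  obtain ⟨y, hyY, hy⟩ := hcore I hI𝓘 C hC hCk x hx hIA
  refine ⟨y, Finset.mem_biUnion.mpr ⟨I, hI𝓘, hyY⟩, ?_⟩
  have hyavail : I ⊆ avail y := (hYsub I hI𝓘 y hyY).2
  -- step 1: inf over avail x ≤ √d * inf over I for x
  have step1 : C.inf' hC (fun c => distOn A x c) ≤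
      Real.sqrt d * C.inf' hC (fun c => distOn I x c) := by
    obtain ⟨c₀, hc₀C, hc₀⟩ := Finset.exists_mem_eq_inf' hC (fun c => distOn I x c)
    rw [hc₀]
    refine le_trans (Finset.inf'_le _ hc₀C) ?_
    have hgc₀ : g c₀ ∈ I := hKI (hK₀K (Finset.mem_image_of_mem g hc₀C))
    have h1 : ∑ i ∈ A, ((x i).getD 0 - c₀ i) ^ 2 ≤
        d * ((x (g c₀)).getD 0 - c₀ (g c₀)) ^ 2 := by
      calc ∑ i ∈ A, ((x i).getD 0 - c₀ i) ^ 2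
          ≤ A.card • ((x (g c₀)).getD 0 - c₀ (g c₀)) ^ 2 :=
            Finset.sum_le_card_nsmul A _ _ (fun i hi => hg2 c₀ i hi)
        _ = (A.card : ℝ) * ((x (g c₀)).getD 0 - c₀ (g c₀)) ^ 2 := by
            rw [nsmul_eq_mul]
        _ ≤ d * ((x (g c₀)).getD 0 - c₀ (g c₀)) ^ 2 := by
            apply mul_le_mul_of_nonneg_right _ (sq_nonneg _)
            exact_mod_cast hAle
    have h2 : ((x (g c₀)).getD 0 - c₀ (g c₀)) ^ 2 ≤
        ∑ i ∈ I, ((x i).getD 0 - c₀ i) ^ 2 :=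
      Finset.single_le_sum (f := fun i => ((x i).getD 0 - c₀ i) ^ 2)
        (fun i _ => sq_nonneg _) hgc₀
    calc distOn A x c₀ = Real.sqrt (∑ i ∈ A, ((x i).getD 0 - c₀ i) ^ 2) := rfl
      _ ≤ Real.sqrt (d * ∑ i ∈ I, ((x i).getD 0 - c₀ i) ^ 2) := by
          apply Real.sqrt_le_sqrt
          refine le_trans h1 ?_
          exact mul_le_mul_of_nonneg_left h2 (by positivity)
      _ = Real.sqrt d * distOn I x c₀ := by
          rw [Real.sqrt_mul (by positivity)]; rfl
  -- step 2: inf over I for y ≤ inf over avail y for y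
  have step3 : C.inf' hC (fun c => distOn I y c) ≤
      C.inf' hC (fun c => distOn (avail y) y c) := by
    apply Finset.le_inf'
    intro c hc
    exact le_trans (Finset.inf'_le _ hc) (distOn_mono hyavail y c)
  calc C.inf' hC (fun c => distOn A x c)
      ≤ Real.sqrt d * C.inf' hC (fun c => distOn I x c) := step1
    _ ≤ Real.sqrt d * (α * C.inf' hC (fun c => distOn I y c)) :=
        mul_le_mul_of_nonneg_left hy (Real.sqrt_nonneg d)
    _ ≤ Real.sqrt d * (α * C.inf' hC (fun c => distOn (avail y) y c)) := by
        apply mul_le_mul_of_nonneg_left _ (Real.sqrt_nonneg d)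
        exact mul_le_mul_of_nonneg_left step3 hα
    _ = α * Real.sqrt d * C.inf' hC (fun c => distOn (avail y) y c) := by ring
end

section
/- Lower bound instance for coresets with missing values: let d = 2j and let P = {p(I) : I ⊆ [d], |I| = j} where p(I) has coordinate 1 on indices in I and missing (?) elsewhere. Then any weighted subset D ⊆ P that is a (1/2)-coreset for k-means with missing values with k = j must contain every point of P, i.e., D = P. -/
/-- The point with coordinate 1 on indices in `I` and missing elsewhere. -/
def pI {d : ℕ} (I : Finset (Fin d)) : Fin d → Option ℝ :=
  fun i => if i ∈ I then some 1 else none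

/-- Squared distance (evaluated only on available coordinates) between a point with
missing values and an ordinary point. -/
noncomputable def mcost2 {d : ℕ} (x : Fin d → Option ℝ) (c : Fin d → ℝ) : ℝ :=
  ∑ i ∈ Finset.univ.filter (fun i => x i ≠ none), ((x i).getD 0 - c i) ^ 2

lemma pI_inj {d : ℕ} : Function.Injective (pI (d := d)) := by
  intro I I' h
  ext i
  have := congrFun h i
  simp only [pI] at this
  by_cases hi : i ∈ I <;> by_cases hi' : i ∈ I' <;> simp_all

/-- center with 0 at coordinate i, 1 elsewhere -/
def cfun {d : ℕ} (i : Fin d) : Fin d → ℝ := fun i' => if i' = i then 0 else 1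

lemma cfun_inj {d : ℕ} : Function.Injective (cfun (d := d)) := by
  intro a b h
  have := congrFun h a
  simp only [cfun, if_pos rfl] at this
  by_cases hab : a = b
  · exact hab
  · simp [hab] at this

lemma filter_pI {d : ℕ} (I : Finset (Fin d)) :
    Finset.univ.filter (fun i => pI I i ≠ none) = I := by
  ext i
  simp only [Finset.mem_filter, Finset.mem_univ, true_and, pI]
  by_cases hi : i ∈ I <;> simp [hi]

lemma mcost2_pI_cfun {d : ℕ} (I' : Finset (Fin d)) (i : Fin d) :
    mcost2 (pI I') (cfun i) = if i ∈ I' then 1 else 0 := by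
  unfold mcost2
  rw [filter_pI]
  have : ∀ i' ∈ I', ((pI I' i').getD 0 - cfun i i') ^ 2 = if i' = i then 1 else 0 := by
    intro i' hi'
    simp only [pI, if_pos hi', Option.getD_some, cfun]
    by_cases h : i' = i <;> simp [h]
  rw [Finset.sum_congr rfl this, Finset.sum_ite_eq' I' i (fun _ => (1 : ℝ))]

theorem stmt14 (j : ℕ) (hj : 1 ≤ j)
    (D : Finset (Fin (2 * j) → Option ℝ)) (w : (Fin (2 * j) → Option ℝ) → ℝ)
    (hD : D ⊆ (Finset.powersetCard j (Finset.univ : Finset (Fin (2 * j)))).image pI)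
    (hw : ∀ x ∈ D, 0 ≤ w x)
    (hcore : ∀ C : Finset (Fin (2 * j) → ℝ), ∀ hC : C.Nonempty, C.card = j →
      |(∑ x ∈ D, w x * C.inf' hC (fun c => mcost2 x c)) -
        ∑ x ∈ (Finset.powersetCard j (Finset.univ : Finset (Fin (2 * j)))).image pI,
          C.inf' hC (fun c => mcost2 x c)| ≤
      (1 / 2) * ∑ x ∈ (Finset.powersetCard j (Finset.univ : Finset (Fin (2 * j)))).image pI,
          C.inf' hC (fun c => mcost2 x c)) :
    D = (Finset.powersetCard j (Finset.univ : Finset (Fin (2 * j)))).image pI := by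
  by_contra hne
  -- there is some I with pI I ∉ D
  obtain ⟨x0, hx0P, hx0D⟩ : ∃ x ∈ (Finset.powersetCard j
      (Finset.univ : Finset (Fin (2 * j)))).image pI, x ∉ D := by
    by_contra h
    push_neg at h
    exact hne (Finset.Subset.antisymm hD h)
  obtain ⟨I, hI, rfl⟩ := Finset.mem_image.mp hx0P
  have hIcard : I.card = j := (Finset.mem_powersetCard.mp hI).2
  -- the centers
  set C : Finset (Fin (2 * j) → ℝ) := I.image cfun with hC
  have hInonempty : I.Nonempty := Finset.card_pos.mp (by omega)
  have hCne : C.Nonempty := hInonempty.image _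
  have hCcard : C.card = j := by
    rw [hC, Finset.card_image_of_injective _ cfun_inj, hIcard]
  -- inf' of mcost2 (pI I') over C
  have hinf : ∀ I' : Finset (Fin (2 * j)), I'.card = j →
      C.inf' hCne (fun c => mcost2 (pI I') c) = if I' = I then 1 else 0 := by
    intro I' hI'card
    by_cases hII : I' = I
    · subst hII
      rw [if_pos rfl]
      apply le_antisymm
      · obtain ⟨i, hi⟩ := hInonempty
        calc C.inf' hCne (fun c => mcost2 (pI I') c) ≤ mcost2 (pI I') (cfun i) :=
              Finset.inf'_le _ (Finset.mem_image_of_mem _ hi)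
          _ = 1 := by rw [mcost2_pI_cfun, if_pos hi]
      · apply Finset.le_inf'
        intro c hc
        obtain ⟨i, hi, rfl⟩ := Finset.mem_image.mp hc
        rw [mcost2_pI_cfun, if_pos hi]
    · rw [if_neg hII]
      -- exists i ∈ I \ I'
      obtain ⟨i, hiI, hiI'⟩ : ∃ i ∈ I, i ∉ I' := by
        by_contra h
        push_neg at h
        exact hII (Finset.eq_of_subset_of_card_le h (by omega)).symm
      apply le_antisymm
      · calc C.inf' hCne (fun c => mcost2 (pI I') c) ≤ mcost2 (pI I') (cfun i) :=
              Finset.inf'_le _ (Finset.mem_image_of_mem _ hiI)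
          _ = 0 := by rw [mcost2_pI_cfun, if_neg hiI']
      · apply Finset.le_inf'
        intro c hc
        obtain ⟨i', hi', rfl⟩ := Finset.mem_image.mp hc
        rw [mcost2_pI_cfun]
        split <;> norm_num
  -- true cost = 1
  have htrue : ∑ x ∈ (Finset.powersetCard j (Finset.univ : Finset (Fin (2 * j)))).image pI,
      C.inf' hCne (fun c => mcost2 x c) = 1 := by
    rw [Finset.sum_image (fun a _ b _ h => pI_inj h)]
    have : ∀ I' ∈ Finset.powersetCard j (Finset.univ : Finset (Fin (2 * j))),
        C.inf' hCne (fun c => mcost2 (pI I') c) = if I' = I then 1 else 0 := fun I' hI' =>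
      hinf I' (Finset.mem_powersetCard.mp hI').2
    rw [Finset.sum_congr rfl this, Finset.sum_ite_eq' _ I (fun _ => (1 : ℝ)), if_pos hI]
  -- coreset cost = 0
  have hcore0 : ∑ x ∈ D, w x * C.inf' hCne (fun c => mcost2 x c) = 0 := by
    apply Finset.sum_eq_zero
    intro x hx
    obtain ⟨I', hI', rfl⟩ := Finset.mem_image.mp (hD hx)
    have hII : I' ≠ I := fun h => hx0D (h ▸ hx)
    rw [hinf I' (Finset.mem_powersetCard.mp hI').2, if_neg hII, mul_zero]
  have := hcore C hCne hCcard
  rw [htrue, hcore0] at this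
  norm_num at this
end

section
/- In the lower bound instance: for distinct j-element subsets I, I' of [d] with d = 2j, and centers C = {c^i : i ∈ I} where c^i ∈ ℝ^d has 0 in coordinate i and 1 in all other coordinates, the point p(I') (equal to 1 on I' and missing elsewhere) satisfies dist(p(I'), C) = 0, while p(I) satisfies dist(p(I), C) = 1. -/
lemma mcost2_pI {d : ℕ} (S : Finset (Fin d)) (c : Fin d → ℝ) :
    mcost2 (pI S) c = ∑ t ∈ S, (1 - c t) ^ 2 := by
  unfold mcost2 pI
  rw [Finset.sum_congr rfl (fun i hi => ?_)]
  · congr 1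
    ext i
    simp only [Finset.mem_filter, Finset.mem_univ, true_and]
    by_cases h : i ∈ S <;> simp [h]
  · rw [Finset.mem_filter] at hi
    by_cases h : i ∈ S <;> simp [h] at hi ⊢

theorem stmt15 (j : ℕ) (hj : 1 ≤ j) (I I' : Finset (Fin (2 * j)))
    (hI : I.card = j) (hI' : I'.card = j) (hne : I ≠ I')
    (hCne : (I.image (fun i => fun t => if t = i then (0 : ℝ) else 1)).Nonempty) :
    (I.image fun i => fun t => if t = i then (0 : ℝ) else 1).inf' hCne
        (fun c => Real.sqrt (mcost2 (pI I') c)) = 0 ∧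
    (I.image fun i => fun t => if t = i then (0 : ℝ) else 1).inf' hCne
        (fun c => Real.sqrt (mcost2 (pI I) c)) = 1 := by
  constructor
  · -- get i' ∈ I \ I'
    obtain ⟨i', hi'⟩ : (I \ I').Nonempty := by
      rw [Finset.sdiff_nonempty]
      intro hsub
      exact hne (Finset.eq_of_subset_of_card_le hsub (by rw [hI, hI']))
    rw [Finset.mem_sdiff] at hi'
    apply le_antisymm
    · apply Finset.inf'_le_of_le (b := fun t => if t = i' then (0:ℝ) else 1)
      · exact Finset.mem_image_of_mem _ hi'.1
      · rw [mcost2_pI]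
        have : ∑ t ∈ I', (1 - if t = i' then (0:ℝ) else 1) ^ 2 = 0 := by
          apply Finset.sum_eq_zero
          intro t ht
          have : t ≠ i' := fun h => hi'.2 (h ▸ ht)
          simp [this]
        rw [this, Real.sqrt_zero]
    · apply Finset.le_inf'
      intro b _
      exact Real.sqrt_nonneg _
  · have key : ∀ c ∈ I.image fun i => fun t => if t = i then (0:ℝ) else 1,
        Real.sqrt (mcost2 (pI I) c) = 1 := by
      intro c hc
      rw [Finset.mem_image] at hc
      obtain ⟨i, hi, rfl⟩ := hc
      rw [mcost2_pI]
      have : ∑ t ∈ I, (1 - if t = i then (0:ℝ) else 1) ^ 2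
          = ∑ t ∈ I, if t = i then (1:ℝ) else 0 := by
        apply Finset.sum_congr rfl
        intro t _
        by_cases h : t = i <;> simp [h]
      rw [this, Finset.sum_ite_eq' I i (fun _ => (1:ℝ)), if_pos hi, Real.sqrt_one]
    obtain ⟨c₀, hc₀⟩ := hCne
    apply le_antisymm
    · exact le_of_le_of_eq (Finset.inf'_le _ hc₀) (key c₀ hc₀)
    · exact Finset.le_inf' _ _ fun b hb => (key b hb).ge
end

section
/- Ball membership as a halfspace condition: for any weight function v : ℝ_?^d → ℝ_{>0}, any point h ∈ ℝ_?^d with non-missing coordinate set I_h, any center c ∈ ℝ^d and radius r ≥ 0, the condition v(h)·dist(h,c) ≤ r is equivalent to ⟨f(h), g(c,r)⟩ ≤ 0 where f(h) ∈ ℝ^{3d+1} is the vector ((v(h)²h_i²·𝟙[i∈I_h])_i, (v(h)²·𝟙[i∈I_h])_i, (-2v(h)²h_i·𝟙[i∈I_h])_i, -1) and g(c,r) = ((1)_i, (c_i²)_i, (c_i)_i, r²). -/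
theorem stmt16 (d : ℕ) (v : (Fin d → Option ℝ) → ℝ) (h : Fin d → Option ℝ)
    (hv : 0 < v h) (c : Fin d → ℝ) (r : ℝ) (hr : 0 ≤ r) :
    v h * Real.sqrt (∑ i ∈ Finset.univ.filter (fun i => h i ≠ none),
        ((h i).getD 0 - c i) ^ 2) ≤ r ↔
      (∑ i : Fin d, (if h i ≠ none then (v h) ^ 2 * ((h i).getD 0) ^ 2 else 0) * 1) +
        (∑ i : Fin d, (if h i ≠ none then (v h) ^ 2 else 0) * (c i) ^ 2) +
        (∑ i : Fin d, (if h i ≠ none then -2 * (v h) ^ 2 * (h i).getD 0 else 0) * c i) +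
        (-1) * r ^ 2 ≤ 0 := by
  set S := ∑ i ∈ Finset.univ.filter (fun i => h i ≠ none), ((h i).getD 0 - c i) ^ 2 with hS
  have hS0 : 0 ≤ S := Finset.sum_nonneg fun i _ => sq_nonneg _
  have hsum : (∑ i : Fin d, (if h i ≠ none then (v h) ^ 2 * ((h i).getD 0) ^ 2 else 0) * 1) +
        (∑ i : Fin d, (if h i ≠ none then (v h) ^ 2 else 0) * (c i) ^ 2) +
        (∑ i : Fin d, (if h i ≠ none then -2 * (v h) ^ 2 * (h i).getD 0 else 0) * c i) +
        (-1) * r ^ 2 = (v h) ^ 2 * S - r ^ 2 := by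
    have key : ∀ i ∈ Finset.univ, (if h i ≠ none then (v h) ^ 2 * ((h i).getD 0) ^ 2 else 0) * 1 +
        ((if h i ≠ none then (v h) ^ 2 else 0) * (c i) ^ 2 +
        (if h i ≠ none then -2 * (v h) ^ 2 * (h i).getD 0 else 0) * c i) =
        if h i ≠ none then (v h) ^ 2 * ((h i).getD 0 - c i) ^ 2 else 0 := by
      intro i _
      by_cases hi : h i = none <;> simp [hi] <;> ring
    rw [hS, Finset.mul_sum, Finset.sum_filter, add_assoc (∑ i : Fin d, _),
      ← Finset.sum_add_distrib, ← Finset.sum_add_distrib, Finset.sum_congr rfl key]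
    ring
  rw [hsum]
  constructor
  · intro hle
    have h1 : (v h * Real.sqrt S) ^ 2 ≤ r ^ 2 := by
      apply sq_le_sq' _ hle
      nlinarith [Real.sqrt_nonneg S, mul_nonneg hv.le (Real.sqrt_nonneg S)]
    have h2 : (v h) ^ 2 * S ≤ r ^ 2 := by
      rw [mul_pow, Real.sq_sqrt hS0] at h1
      exact h1
    linarith
  · intro hle
    have h2 : (v h) ^ 2 * S ≤ r ^ 2 := by linarith
    have h3 : (v h * Real.sqrt S) ^ 2 ≤ r ^ 2 := by
      rw [mul_pow, Real.sq_sqrt hS0]; exact h2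
    nlinarith [mul_nonneg hv.le (Real.sqrt_nonneg S)]
end

section
/- If for every a, b in a finite set X ⊆ ℝ^m we have |⟨a - b, w⟩| ≤ L·‖a-b‖₂, and x ∈ X satisfies |⟨x - c, w⟩| ≥ ℓ·‖x - c‖₂ for all c in a finite set Q ⊆ X, where x is the furthest point of X from Q, then any point p ∈ X maximizing dist(⟨p,w⟩, ⟨Q,w⟩) := min_{c∈Q}|⟨p-c,w⟩| satisfies dist(p, Q) ≥ (ℓ/L)·dist(x, Q). -/
/-- Euclidean distance between two points of `ℝ^m`. -/
noncomputable def enorm' {m : ℕ} (a b : Fin m → ℝ) : ℝ :=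
  Real.sqrt (∑ i, (a i - b i) ^ 2)

/-- Inner product of the difference `a - b` with a direction `w`. -/
noncomputable def ip' {m : ℕ} (w a b : Fin m → ℝ) : ℝ :=
  ∑ i, (a i - b i) * w i

theorem stmt18 (m : ℕ) (w : Fin m → ℝ) (X Q : Finset (Fin m → ℝ)) (hQX : Q ⊆ X)
    (hQ : Q.Nonempty) (L ℓ : ℝ) (hℓ : 0 < ℓ) (hL : ℓ ≤ L)
    (hproj : ∀ a ∈ X, ∀ b ∈ X, |ip' w a b| ≤ L * enorm' a b)
    (x : Fin m → ℝ) (hx : x ∈ X)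
    (hxl : ∀ c ∈ Q, ℓ * enorm' x c ≤ |ip' w x c|)
    (hxfar : ∀ p ∈ X, Q.inf' hQ (fun c => enorm' p c) ≤ Q.inf' hQ (fun c => enorm' x c))
    (p : Fin m → ℝ) (hp : p ∈ X)
    (hpmax : ∀ q ∈ X, Q.inf' hQ (fun c => |ip' w q c|) ≤ Q.inf' hQ (fun c => |ip' w p c|)) :
    (ℓ / L) * Q.inf' hQ (fun c => enorm' x c) ≤ Q.inf' hQ (fun c => enorm' p c) := by
  have hLpos : 0 < L := lt_of_lt_of_le hℓ hL
  obtain ⟨c₀, hc₀Q, hc₀⟩ := Q.exists_mem_eq_inf' hQ (fun c => enorm' p c)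
  have key : ℓ * Q.inf' hQ (fun c => enorm' x c) ≤ L * Q.inf' hQ (fun c => enorm' p c) := by
    calc ℓ * Q.inf' hQ (fun c => enorm' x c)
        ≤ Q.inf' hQ (fun c => |ip' w x c|) := by
          apply Finset.le_inf'
          intro c hc
          calc ℓ * Q.inf' hQ (fun c => enorm' x c)
              ≤ ℓ * enorm' x c := by
                exact mul_le_mul_of_nonneg_left (Finset.inf'_le _ hc) hℓ.le
            _ ≤ |ip' w x c| := hxl c hc
      _ ≤ Q.inf' hQ (fun c => |ip' w p c|) := hpmax x hx
      _ ≤ |ip' w p c₀| := Finset.inf'_le _ hc₀Q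
      _ ≤ L * enorm' p c₀ := hproj p hp c₀ (hQX hc₀Q)
      _ = L * Q.inf' hQ (fun c => enorm' p c) := by rw [← hc₀]
  rw [div_mul_eq_mul_div, div_le_iff₀ hLpos] at *
  linarith [key]
end
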